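/- The functors between crossed modules and strict 2-groups (sending a crossed module [φ : G₂ → G₁] to the group-in-groupoids with objects G₁ and arrows G₁ ⋊ G₂, and sending a 2-group to the crossed module of arrows out of the identity object) are mutually inverse up to natural isomorphism, giving an equivalence of categories between crossed modules and strict 2-groups. -/

import Mathlib

open CategoryTheory

/-- A crossed module `[φ : G₂ → G₁]`. -/
structure CrossedModule (G₁ G₂ : Type) [Group G₁] [Group G₂] where
  φ : G₂ →* G₁
  act : G₂ → G₁ → G₂
  act_one : ∀ β : G₂, act β 1 = β
  act_mul : ∀ (β : G₂) (a b : G₁), act β (a * b) = act (act β a) b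
  mul_act : ∀ (α β : G₂) (a : G₁), act (α * β) a = act α a * act β a
  cm1 : ∀ α β : G₂, act β (φ α) = α⁻¹ * β * α
  cm2 : ∀ (β : G₂) (a : G₁), φ (act β a) = a⁻¹ * φ β * a

/-- A strict 2-group: a groupoid internal to groups. -/
structure Strict2Group (Ob Ar : Type) [Group Ob] [Group Ar] where
  s : Ar →* Ob
  t : Ar →* Ob
  e : Ob →* Ar
  s_e : ∀ g : Ob, s (e g) = g
  t_e : ∀ g : Ob, t (e g) = g
  comp : Ar → Ar → Ar
  s_comp : ∀ f g : Ar, t f = s g → s (comp f g) = s f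
  t_comp : ∀ f g : Ar, t f = s g → t (comp f g) = t g
  id_comp : ∀ f : Ar, comp (e (s f)) f = f
  comp_id : ∀ f : Ar, comp f (e (t f)) = f
  comp_assoc : ∀ f g h : Ar, t f = s g → t g = s h →
    comp (comp f g) h = comp f (comp g h)
  inv' : Ar → Ar
  s_inv : ∀ f : Ar, s (inv' f) = t f
  t_inv : ∀ f : Ar, t (inv' f) = s f
  comp_inv : ∀ f : Ar, comp f (inv' f) = e (s f)
  inv_comp : ∀ f : Ar, comp (inv' f) f = e (t f)
  comp_hom : ∀ f g f' g' : Ar, t f = s g → t f' = s g' →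
    comp (f * f') (g * g') = comp f g * comp f' g'

/-- The category of crossed modules. -/
structure CrsMod where
  G₁ : Type
  G₂ : Type
  [grp₁ : Group G₁]
  [grp₂ : Group G₂]
  M : CrossedModule G₁ G₂

attribute [instance] CrsMod.grp₁ CrsMod.grp₂

/-- Morphisms of crossed modules: pairs of group homomorphisms commuting with
the structure maps and equivariant for the actions. -/
@[ext]
structure CrsModHom (X Y : CrsMod) where
  f₁ : X.G₁ →* Y.G₁
  f₂ : X.G₂ →* Y.G₂
  commutes : ∀ α : X.G₂, Y.M.φ (f₂ α) = f₁ (X.M.φ α)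
  equivariant : ∀ (α : X.G₂) (g : X.G₁), f₂ (X.M.act α g) = Y.M.act (f₂ α) (f₁ g)

instance : Category CrsMod where
  Hom := CrsModHom
  id X := ⟨MonoidHom.id _, MonoidHom.id _, fun _ => rfl, fun _ _ => rfl⟩
  comp {X Y Z} f g :=
    ⟨g.f₁.comp f.f₁, g.f₂.comp f.f₂,
      fun α => by simp [g.commutes, f.commutes],
      fun α a => by simp [g.equivariant, f.equivariant]⟩
  id_comp f := rfl
  comp_id f := rfl
  assoc f g h := rfl

/-- The category of strict 2-groups (group objects in groupoids). -/
structure Str2Gp where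
  Ob : Type
  Ar : Type
  [grpOb : Group Ob]
  [grpAr : Group Ar]
  G : Strict2Group Ob Ar

attribute [instance] Str2Gp.grpOb Str2Gp.grpAr

/-- Morphisms of strict 2-groups: functors of the underlying groupoids which are
group homomorphisms on objects and on arrows. -/
@[ext]
structure Str2GpHom (X Y : Str2Gp) where
  onOb : X.Ob →* Y.Ob
  onAr : X.Ar →* Y.Ar
  map_s : ∀ f : X.Ar, Y.G.s (onAr f) = onOb (X.G.s f)
  map_t : ∀ f : X.Ar, Y.G.t (onAr f) = onOb (X.G.t f)
  map_e : ∀ g : X.Ob, onAr (X.G.e g) = Y.G.e (onOb g)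
  map_comp : ∀ f g : X.Ar, X.G.t f = X.G.s g →
    onAr (X.G.comp f g) = Y.G.comp (onAr f) (onAr g)

instance : Category Str2Gp where
  Hom := Str2GpHom
  id X := ⟨MonoidHom.id _, MonoidHom.id _, fun _ => rfl, fun _ => rfl, fun _ => rfl,
    fun _ _ _ => rfl⟩
  comp {X Y Z} F G :=
    ⟨G.onOb.comp F.onOb, G.onAr.comp F.onAr,
      fun f => by simp [G.map_s, F.map_s],
      fun f => by simp [G.map_t, F.map_t],
      fun g => by simp [G.map_e, F.map_e],
      fun f g h => by
        simp only [MonoidHom.comp_apply, F.map_comp f g h]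
        exact G.map_comp _ _ (by rw [F.map_t, F.map_s, h])⟩
  id_comp f := rfl
  comp_id f := rfl
  assoc f g h := rfl

namespace CrsModEquiv

/-! ### Basic lemmas on crossed modules -/

section CMlemmas

variable {G₁ G₂ : Type} [Group G₁] [Group G₂] (M : CrossedModule G₁ G₂)

@[simp] lemma act_one_left (a : G₁) : M.act 1 a = 1 := by
  have h := M.mul_act 1 1 a
  rw [one_mul] at h
  exact (mul_left_cancel (a := M.act 1 a) (by rw [← h, mul_one])).symm

lemma act_inv (β : G₂) (a : G₁) : M.act β⁻¹ a = (M.act β a)⁻¹ := by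
  have h : M.act β⁻¹ a * M.act β a = 1 := by
    rw [← M.mul_act, inv_mul_cancel, act_one_left]
  exact eq_inv_of_mul_eq_one_left h

end CMlemmas

/-! ### The semidirect product `G₁ ⋊ G₂` as the arrows of a strict 2-group -/

@[ext] structure SD (X : CrsMod) where
  a : X.G₁
  b : X.G₂

namespace SD

variable {X : CrsMod}

instance : Mul (SD X) := ⟨fun p q => ⟨p.a * q.a, X.M.act p.b q.a * q.b⟩⟩
instance : One (SD X) := ⟨⟨1, 1⟩⟩
instance : Inv (SD X) := ⟨fun p => ⟨p.a⁻¹, (X.M.act p.b p.a⁻¹)⁻¹⟩⟩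

@[simp] lemma mul_a (p q : SD X) : (p * q).a = p.a * q.a := rfl
@[simp] lemma mul_b (p q : SD X) : (p * q).b = X.M.act p.b q.a * q.b := rfl
@[simp] lemma one_a : (1 : SD X).a = 1 := rfl
@[simp] lemma one_b : (1 : SD X).b = 1 := rfl
@[simp] lemma inv_a (p : SD X) : p⁻¹.a = p.a⁻¹ := rfl
@[simp] lemma inv_b (p : SD X) : p⁻¹.b = (X.M.act p.b p.a⁻¹)⁻¹ := rfl

instance : Group (SD X) where
  mul_assoc p q r := by
    ext
    · simp [mul_assoc]
    · simp [X.M.act_mul, X.M.mul_act, mul_assoc]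
  one_mul p := by ext <;> simp
  mul_one p := by ext <;> simp [X.M.act_one]
  inv_mul_cancel p := by
    ext
    · simp
    · show X.M.act (X.M.act p.b p.a⁻¹)⁻¹ p.a * p.b = 1
      rw [act_inv, ← X.M.act_mul, inv_mul_cancel, X.M.act_one, inv_mul_cancel]

end SD

section Fdef

variable (X : CrsMod)

/-- Source map. -/
def sSD : SD X →* X.G₁ where
  toFun p := p.a
  map_one' := rfl
  map_mul' _ _ := rfl

/-- Target map. -/
def tSD : SD X →* X.G₁ where
  toFun p := p.a * X.M.φ p.b
  map_one' := by simp
  map_mul' p q := by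
    simp [X.M.cm2, mul_assoc]

/-- Identity map. -/
def eSD : X.G₁ →* SD X where
  toFun a := ⟨a, 1⟩
  map_one' := rfl
  map_mul' a b := by ext <;> simp

@[simp] lemma sSD_apply (p : SD X) : sSD X p = p.a := rfl
@[simp] lemma tSD_apply (p : SD X) : tSD X p = p.a * X.M.φ p.b := rfl
@[simp] lemma eSD_apply (a : X.G₁) : eSD X a = ⟨a, 1⟩ := rfl

/-- The strict 2-group associated to a crossed module. -/
def FobjG : Strict2Group X.G₁ (SD X) where
  s := sSD X
  t := tSD X
  e := eSD X
  s_e g := rfl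
  t_e g := by simp
  comp f g := ⟨f.a, f.b * g.b⟩
  s_comp f g h := rfl
  t_comp f g h := by
    simp only [tSD_apply, sSD_apply] at h ⊢
    rw [map_mul, ← mul_assoc, h]
  id_comp f := by ext <;> simp
  comp_id f := by ext <;> simp
  comp_assoc f g h _ _ := by ext <;> simp [mul_assoc]
  inv' f := ⟨f.a * X.M.φ f.b, f.b⁻¹⟩
  s_inv f := rfl
  t_inv f := by simp
  comp_inv f := by ext <;> simp
  inv_comp f := by ext <;> simp
  comp_hom f g f' g' h h' := by
    simp only [tSD_apply, sSD_apply] at h h'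
    ext
    · rfl
    · show X.M.act f.b f'.a * f'.b * (X.M.act g.b g'.a * g'.b) =
        X.M.act (f.b * g.b) f'.a * (f'.b * g'.b)
      rw [← h', X.M.act_mul, X.M.cm1, X.M.mul_act]
      simp [mul_assoc]

/-- The functor from crossed modules to strict 2-groups. -/
def F : CrsMod ⥤ Str2Gp where
  obj X := ⟨X.G₁, SD X, FobjG X⟩
  map {X Y} u :=
    { onOb := u.f₁
      onAr :=
        { toFun := fun p => ⟨u.f₁ p.a, u.f₂ p.b⟩
          map_one' := by ext <;> simp
          map_mul' := fun p q => by ext <;> simp [u.equivariant] }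
      map_s := fun f => rfl
      map_t := fun f => by simp [FobjG, u.commutes]
      map_e := fun g => by ext <;> simp [FobjG]
      map_comp := fun f g h => by ext <;> simp [FobjG] }
  map_id X := rfl
  map_comp f g := rfl

end Fdef

/-! ### Key composition lemmas in a strict 2-group -/

section S2Glemmas

variable {Ob Ar : Type} [Group Ob] [Group Ar] (G : Strict2Group Ob Ar)

lemma comp_eq {f g : Ar} (h : G.t f = G.s g) :
    G.comp f g = f * (G.e (G.t f))⁻¹ * g := by
  have h1 : G.t f = G.s (G.e (G.t f)) := (G.s_e _).symm
  have h2 : G.t (1 : Ar) = G.s ((G.e (G.t f))⁻¹ * g) := by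
    rw [map_one, map_mul, map_inv, G.s_e, ← h, inv_mul_cancel]
  have key := G.comp_hom f (G.e (G.t f)) 1 ((G.e (G.t f))⁻¹ * g) h1 h2
  rw [mul_one, mul_inv_cancel_left, G.comp_id] at key
  have h3 : G.comp (1 : Ar) ((G.e (G.t f))⁻¹ * g) = (G.e (G.t f))⁻¹ * g := by
    have : (1 : Ar) = G.e (G.s ((G.e (G.t f))⁻¹ * g)) := by
      rw [← h2]; simp
    rw [this, G.id_comp]
  rw [h3] at key
  rw [key, mul_assoc]

lemma ker_comm {v β : Ar} (hv : G.t v = 1) (hβ : G.s β = 1) : v * β = β * v := by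
  have h1 : G.t (1 : Ar) = G.s β := by simp [hβ]
  have h2 : G.t v = G.s (1 : Ar) := by simp [hv]
  have key := G.comp_hom 1 β v 1 h1 h2
  rw [one_mul, mul_one] at key
  have c1 : G.comp (1 : Ar) β = β := by
    have : (1 : Ar) = G.e (G.s β) := by rw [hβ]; simp
    rw [this, G.id_comp]
  have c2 : G.comp v (1 : Ar) = v := by
    have : (1 : Ar) = G.e (G.t v) := by rw [hv]; simp
    rw [this, G.comp_id]
  rw [c1, c2] at key
  have c3 : G.comp v β = v * β := by
    rw [comp_eq G (by rw [hv, hβ]), hv]; simp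
  rw [c3] at key
  exact key

end S2Glemmas

/-! ### The functor from strict 2-groups to crossed modules -/

section Bdef

variable (Y : Str2Gp)

lemma mem_sker (β : ↥Y.G.s.ker) : Y.G.s (β : Y.Ar) = 1 := β.2

/-- The crossed module associated to a strict 2-group. -/
def BobjM : CrossedModule Y.Ob ↥Y.G.s.ker where
  φ := Y.G.t.comp Y.G.s.ker.subtype
  act β a := ⟨(Y.G.e a)⁻¹ * β * Y.G.e a, by
    have hβ := mem_sker Y β
    simp [MonoidHom.mem_ker, hβ, Y.G.s_e]⟩
  act_one β := by
    apply Subtype.ext; simp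
  act_mul β a b := by
    apply Subtype.ext; simp [mul_assoc]
  mul_act α β a := by
    apply Subtype.ext
    show (Y.G.e a)⁻¹ * (↑α * ↑β) * Y.G.e a =
      ((Y.G.e a)⁻¹ * ↑α * Y.G.e a) * ((Y.G.e a)⁻¹ * ↑β * Y.G.e a)
    group
  cm1 α β := by
    apply Subtype.ext
    show (Y.G.e (Y.G.t ↑α))⁻¹ * ↑β * Y.G.e (Y.G.t ↑α) = ↑(α⁻¹ * β * α)
    have hv : Y.G.t ((α : Y.Ar) * (Y.G.e (Y.G.t ↑α))⁻¹) = 1 := by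
      simp [Y.G.t_e]
    have h := ker_comm Y.G hv (mem_sker Y β)
    have h2 : (↑α : Y.Ar) * ((Y.G.e (Y.G.t ↑α))⁻¹ * ↑β * Y.G.e (Y.G.t ↑α)) =
        ↑α * ((↑α)⁻¹ * ↑β * ↑α) := by
      calc (↑α : Y.Ar) * ((Y.G.e (Y.G.t ↑α))⁻¹ * ↑β * Y.G.e (Y.G.t ↑α))
          = (↑α * (Y.G.e (Y.G.t ↑α))⁻¹ * ↑β) * Y.G.e (Y.G.t ↑α) := by group
        _ = (↑β * (↑α * (Y.G.e (Y.G.t ↑α))⁻¹)) * Y.G.e (Y.G.t ↑α) := by rw [h]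
        _ = ↑α * ((↑α)⁻¹ * ↑β * ↑α) := by group
    have := mul_left_cancel h2
    rw [this]
    simp
  cm2 β a := by
    simp [Y.G.t_e, mul_assoc]

/-- The functor from strict 2-groups to crossed modules. -/
def B : Str2Gp ⥤ CrsMod where
  obj Y := ⟨Y.Ob, ↥Y.G.s.ker, BobjM Y⟩
  map {Y Z} v :=
    { f₁ := v.onOb
      f₂ := ((v.onAr.comp Y.G.s.ker.subtype).codRestrict Z.G.s.ker
        (fun β => by
          simp only [MonoidHom.mem_ker, MonoidHom.comp_apply]
          rw [v.map_s]
          simp [mem_sker Y β]))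
      commutes := fun α => by
        show Z.G.t (v.onAr ↑α) = v.onOb (Y.G.t ↑α)
        exact v.map_t _
      equivariant := fun α g => by
        apply Subtype.ext
        show v.onAr ((Y.G.e g)⁻¹ * ↑α * Y.G.e g) =
          (Z.G.e (v.onOb g))⁻¹ * v.onAr ↑α * Z.G.e (v.onOb g)
        simp [v.map_e] }
  map_id Y := by
    apply CrsModHom.ext
    · rfl
    · apply MonoidHom.ext; intro β; apply Subtype.ext; rfl
  map_comp f g := by
    apply CrsModHom.ext
    · rfl
    · apply MonoidHom.ext; intro β; apply Subtype.ext; rfl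

attribute [reducible] B

end Bdef

/-! ### The unit isomorphism -/

/-- Explicit cast from the arrows of `F.obj X` to `SD X`. -/
def ofAr (X : CrsMod) (p : (F.obj X).Ar) : SD X := p

/-- Explicit cast from `G₂` of `B.obj Y` to the arrows of `Y`. -/
def arB (Y : Str2Gp) (β : (B.obj Y).G₂) : Y.Ar := β.1

/-- Explicit cast from `G₁` of `B.obj Y` to the objects of `Y`. -/
def obB (Y : Str2Gp) (a : (B.obj Y).G₁) : Y.Ob := a

@[simp] lemma arB_one (Y : Str2Gp) : arB Y 1 = 1 := rfl
@[simp] lemma arB_mul (Y : Str2Gp) (α β : (B.obj Y).G₂) :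
    arB Y (α * β) = arB Y α * arB Y β := rfl
@[simp] lemma arB_s (Y : Str2Gp) (β : (B.obj Y).G₂) : Y.G.s (arB Y β) = 1 := β.2

section UnitIso

variable (X : CrsMod)

/-- Forward map `X ⟶ B(F(X))`. -/
def unitHom : X ⟶ (F ⋙ B).obj X where
  f₁ := MonoidHom.id _
  f₂ :=
    { toFun := fun α => ⟨⟨1, α⟩, MonoidHom.mem_ker.mpr rfl⟩
      map_one' := by apply Subtype.ext; rfl
      map_mul' := fun α β => by
        apply Subtype.ext
        show (⟨1, α * β⟩ : SD X) = ⟨1, α⟩ * ⟨1, β⟩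
        ext <;> simp [X.M.act_one] }
  commutes := fun α => by
    show tSD X ⟨1, α⟩ = X.M.φ α
    simp
  equivariant := fun α g => by
    apply Subtype.ext
    show (⟨1, X.M.act α g⟩ : SD X) = (eSD X g)⁻¹ * ⟨1, α⟩ * eSD X g
    ext <;> simp [X.M.act_one]

/-- Backward map `B(F(X)) ⟶ X`. -/
def unitInv : (F ⋙ B).obj X ⟶ X where
  f₁ := MonoidHom.id _
  f₂ :=
    { toFun := fun p => (ofAr X p.1).b
      map_one' := rfl
      map_mul' := fun p q => by
        have hq : (ofAr X q.1).a = 1 := q.2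
        show (ofAr X p.1 * ofAr X q.1).b = (ofAr X p.1).b * (ofAr X q.1).b
        simp [hq, X.M.act_one] }
  commutes := fun p => by
    have hp : (ofAr X p.1).a = 1 := p.2
    show X.M.φ (ofAr X p.1).b = tSD X (ofAr X p.1)
    simp [hp]
  equivariant := fun p (g : X.G₁) => by
    show ((eSD X g)⁻¹ * ofAr X p.1 * eSD X g).b = X.M.act (ofAr X p.1).b g
    simp [X.M.act_one]

lemma unit_hom_inv : unitHom X ≫ unitInv X = 𝟙 X := by
  apply CrsModHom.ext
  · rfl
  · apply MonoidHom.ext; intro α; rfl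

lemma unit_inv_hom : unitInv X ≫ unitHom X = 𝟙 ((F ⋙ B).obj X) := by
  apply CrsModHom.ext
  · rfl
  · apply MonoidHom.ext; intro p
    apply Subtype.ext
    show (⟨1, (ofAr X p.1).b⟩ : SD X) = ofAr X p.1
    have hp : (ofAr X p.1).a = 1 := p.2
    ext
    · exact hp.symm
    · rfl

/-- The unit natural isomorphism. -/
def unitIso : 𝟭 CrsMod ≅ F ⋙ B :=
  NatIso.ofComponents
    (fun X => ⟨unitHom X, unitInv X, unit_hom_inv X, unit_inv_hom X⟩)
    (fun {X X'} u => by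
      apply CrsModHom.ext
      · apply MonoidHom.ext; intro g; rfl
      · apply MonoidHom.ext; intro α
        apply Subtype.ext
        show (⟨1, u.f₂ α⟩ : SD X') = ⟨u.f₁ 1, u.f₂ α⟩
        ext <;> simp)

end UnitIso

/-! ### The counit isomorphism -/

section CounitIso

variable (Y : Str2Gp)

/-- Forward map `F(B(Y)) ⟶ Y`. -/
def counitHom : (B ⋙ F).obj Y ⟶ Y where
  onOb := MonoidHom.id _
  onAr :=
    { toFun := fun (p : SD (B.obj Y)) => Y.G.e p.a * arB Y p.b
      map_one' := by show Y.G.e 1 * arB Y 1 = 1; simp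
      map_mul' := fun (p q : SD (B.obj Y)) => by
        show Y.G.e (p.a * q.a) * ((Y.G.e q.a)⁻¹ * (arB Y p.b) * Y.G.e q.a * (arB Y q.b)) =
          Y.G.e p.a * (arB Y p.b) * (Y.G.e q.a * (arB Y q.b))
        rw [map_mul]
        group }
  map_s := fun (f : SD (B.obj Y)) => by
    show Y.G.s (Y.G.e f.a * (arB Y f.b)) = f.a
    simp [Y.G.s_e, mem_sker Y f.b]
  map_t := fun (f : SD (B.obj Y)) => by
    show Y.G.t (Y.G.e f.a * (arB Y f.b)) = obB Y f.a * Y.G.t (arB Y f.b)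
    simp [Y.G.t_e, obB]
  map_e := fun g => by
    show Y.G.e g * (1 : Y.Ar) = Y.G.e g
    simp
  map_comp := fun (f g : SD (B.obj Y)) h => by
    show Y.G.e f.a * ((arB Y f.b) * (arB Y g.b)) =
      Y.G.comp (Y.G.e f.a * (arB Y f.b)) (Y.G.e g.a * (arB Y g.b))
    have hb : obB Y f.a * Y.G.t (arB Y f.b) = obB Y g.a := h
    have hfa : Y.G.t (Y.G.e f.a * (arB Y f.b)) = obB Y f.a * Y.G.t (arB Y f.b) := by
      simp [Y.G.t_e, obB]
    have hcomp : Y.G.t (Y.G.e f.a * (arB Y f.b)) = Y.G.s (Y.G.e g.a * (arB Y g.b)) := by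
      rw [hfa, hb]
      simp [Y.G.s_e, obB]
    rw [comp_eq Y.G hcomp, hfa, hb]
    show Y.G.e f.a * (arB Y f.b * arB Y g.b) =
      Y.G.e f.a * arB Y f.b * (Y.G.e (obB Y g.a))⁻¹ * (Y.G.e g.a * arB Y g.b)
    have : Y.G.e (obB Y g.a) = Y.G.e g.a := rfl
    rw [this]
    group

/-- Backward map `Y ⟶ F(B(Y))`. -/
def counitInv : Y ⟶ (B ⋙ F).obj Y where
  onOb := MonoidHom.id _
  onAr :=
    { toFun := fun f => ⟨Y.G.s f, ⟨(Y.G.e (Y.G.s f))⁻¹ * f, by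
        simp [MonoidHom.mem_ker, Y.G.s_e]⟩⟩
      map_one' := by
        apply SD.ext
        · exact map_one Y.G.s
        · apply Subtype.ext; simp; rfl
      map_mul' := fun f g => by
        apply SD.ext
        · exact map_mul Y.G.s f g
        · apply Subtype.ext
          show (Y.G.e (Y.G.s (f * g)))⁻¹ * (f * g) =
            (Y.G.e (Y.G.s g))⁻¹ * ((Y.G.e (Y.G.s f))⁻¹ * f) * Y.G.e (Y.G.s g) *
              ((Y.G.e (Y.G.s g))⁻¹ * g)
          rw [map_mul, map_mul]
          group }
  map_s := fun f => rfl
  map_t := fun f => by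
    show Y.G.s f * Y.G.t ((Y.G.e (Y.G.s f))⁻¹ * f) = Y.G.t f
    simp [Y.G.t_e]
  map_e := fun g => by
    apply SD.ext
    · exact Y.G.s_e g
    · apply Subtype.ext
      show (Y.G.e (Y.G.s (Y.G.e g)))⁻¹ * Y.G.e g = 1
      simp [Y.G.s_e]
  map_comp := fun f g h => by
    have hc : Y.G.comp f g = f * (Y.G.e (Y.G.t f))⁻¹ * g := comp_eq Y.G h
    apply SD.ext
    · show Y.G.s (Y.G.comp f g) = Y.G.s f
      exact Y.G.s_comp f g h
    · apply Subtype.ext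
      show (Y.G.e (Y.G.s (Y.G.comp f g)))⁻¹ * Y.G.comp f g =
        (Y.G.e (Y.G.s f))⁻¹ * f * ((Y.G.e (Y.G.s g))⁻¹ * g)
      rw [Y.G.s_comp f g h, hc, ← h]
      group

lemma counit_hom_inv : counitHom Y ≫ counitInv Y = 𝟙 ((B ⋙ F).obj Y) := by
  apply Str2GpHom.ext
  · rfl
  · apply MonoidHom.ext; intro (p : SD (B.obj Y))
    apply SD.ext
    · show Y.G.s (Y.G.e p.a * (arB Y p.b)) = p.a
      simp [Y.G.s_e, mem_sker Y p.b]
    · apply Subtype.ext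
      show (Y.G.e (Y.G.s (Y.G.e p.a * (arB Y p.b))))⁻¹ * (Y.G.e p.a * (arB Y p.b)) = (arB Y p.b)
      have : Y.G.s (Y.G.e p.a * (arB Y p.b)) = p.a := by
        simp [Y.G.s_e, mem_sker Y p.b]
      rw [this]
      group

lemma counit_inv_hom : counitInv Y ≫ counitHom Y = 𝟙 Y := by
  apply Str2GpHom.ext
  · rfl
  · apply MonoidHom.ext; intro f
    show Y.G.e (Y.G.s f) * ((Y.G.e (Y.G.s f))⁻¹ * f) = f
    group

/-- The counit natural isomorphism. -/
def counitIso : B ⋙ F ≅ 𝟭 Str2Gp :=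
  NatIso.ofComponents
    (fun Y => ⟨counitHom Y, counitInv Y, counit_hom_inv Y, counit_inv_hom Y⟩)
    (fun {Y Y'} v => by
      apply Str2GpHom.ext
      · apply MonoidHom.ext; intro g; rfl
      · apply MonoidHom.ext; intro (p : SD (B.obj Y))
        show Y'.G.e (v.onOb p.a) * v.onAr (arB Y p.b) = v.onAr (Y.G.e p.a * (arB Y p.b))
        rw [map_mul, v.map_e])

end CounitIso

end CrsModEquiv

/-- the functor sending a crossed module `[φ : G₂ → G₁]` to the
group-in-groupoids with objects `G₁` and arrows `G₁ ⋊ G₂`, and the functor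
sending a strict 2-group to the crossed module of arrows out of the identity
object, are mutually inverse up to natural isomorphism: the categories of
crossed modules and of strict 2-groups are equivalent. -/
theorem crsMod_equiv_str2Gp : Nonempty (CrsMod ≌ Str2Gp) := by
  exact ⟨CategoryTheory.Equivalence.mk CrsModEquiv.F CrsModEquiv.B
    CrsModEquiv.unitIso CrsModEquiv.counitIso⟩
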